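/- Let u : ℝ → ℝ be twice continuously differentiable with u' > 0 and u'' < 0, let ħ : [0,1] → ℝ be nonnegative, let λ > 0, and let φ : [0,1] → ℝ be concave. If δ ∈ C²[0,1] satisfies the free boundary problem min{ δ''(p) − ħ(p)·u''((u')⁻¹(δ'(p))), λφ(p) − δ(p) } = 0 for a.e. p ∈ [0,1] (with δ' taking values in the range of u'), then δ is concave on [0,1]. -/

import Mathlib

open MeasureTheory Set

/-- **Corollary**: if `φ` is concave on `[0,1]`, then any `C²` solution `δ` of the
free boundary problem `min{δ'' - hbar·u''((u')⁻¹(δ')), λφ - δ} = 0` a.e. on `[0,1]`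
is concave on `[0,1]`. -/
theorem fbp_solution_concave
    (u : ℝ → ℝ) (hu : ContDiff ℝ 2 u)
    (hu' : ∀ x, 0 < deriv u x) (hu'' : ∀ x, deriv (deriv u) x < 0)
    (hbar : ℝ → ℝ) (hbar0 : ∀ p ∈ Set.Icc (0 : ℝ) 1, 0 ≤ hbar p)
    (lam : ℝ) (hlam : 0 < lam)
    (φ : ℝ → ℝ) (hφconc : ConcaveOn ℝ (Set.Icc 0 1) φ)
    (δ : ℝ → ℝ) (hδC2 : ContDiffOn ℝ 2 δ (Set.Icc 0 1))
    (hrange : ∀ p ∈ Set.Icc (0 : ℝ) 1,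
      derivWithin δ (Set.Icc 0 1) p ∈ Set.range (deriv u))
    (hFBP : ∀ᵐ p ∂(MeasureTheory.volume.restrict (Set.Icc (0 : ℝ) 1)),
      min (derivWithin (derivWithin δ (Set.Icc 0 1)) (Set.Icc 0 1) p -
            hbar p * deriv (deriv u)
              (Function.invFun (deriv u) (derivWithin δ (Set.Icc 0 1) p)))
          (lam * φ p - δ p) = 0) :
    ConcaveOn ℝ (Set.Icc 0 1) δ := by
  set s : Set ℝ := Set.Icc 0 1 with hs
  have uds : UniqueDiffOn ℝ s := uniqueDiffOn_Icc (by norm_num)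
  set d1 : ℝ → ℝ := derivWithin δ s with hd1
  set d2 : ℝ → ℝ := derivWithin d1 s with hd2
  have hd1cd : ContDiffOn ℝ 1 d1 s := hδC2.derivWithin uds (by norm_num)
  have hd2cont : ContinuousOn d2 s := hd1cd.continuousOn_derivWithin uds le_rfl
  have hIoo : Set.Ioo (0:ℝ) 1 ⊆ s := Set.Ioo_subset_Icc_self
  -- interior identification of derivatives
  have e1 : Set.EqOn d1 (deriv δ) (Set.Ioo 0 1) := fun x hx =>
    derivWithin_of_mem_nhds (Icc_mem_nhds hx.1 hx.2)
  have e2 : ∀ x ∈ Set.Ioo (0:ℝ) 1, d2 x = deriv (deriv δ) x := by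
    intro x hx
    have h1 : d2 x = deriv d1 x := derivWithin_of_mem_nhds (Icc_mem_nhds hx.1 hx.2)
    have h2 : d1 =ᶠ[nhds x] deriv δ :=
      Filter.eventuallyEq_of_mem (isOpen_Ioo.mem_nhds hx) e1
    rw [h1, h2.deriv_eq]
  -- key step: second derivative nonpositive in the interior
  have key : ∀ p ∈ Set.Ioo (0:ℝ) 1, d2 p ≤ 0 := by
    intro p₀ hp₀
    by_contra hpos
    push_neg at hpos
    -- continuity gives an interval around p₀ where d2 > 0
    have hca : ContinuousAt d2 p₀ :=
      (hd2cont p₀ (hIoo hp₀)).continuousAt (Icc_mem_nhds hp₀.1 hp₀.2)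
    have hev : ∀ᶠ x in nhds p₀, 0 < d2 x := hca.eventually (eventually_gt_nhds hpos)
    have hev2 : ∀ᶠ x in nhds p₀, 0 < d2 x ∧ x ∈ Set.Ioo (0:ℝ) 1 :=
      hev.and (isOpen_Ioo.mem_nhds hp₀)
    obtain ⟨a, b, hab, habsub⟩ := mem_nhds_iff_exists_Ioo_subset.1 hev2
    have hsubIoo : Set.Ioo a b ⊆ Set.Ioo (0:ℝ) 1 := fun x hx => (habsub hx).2
    have hd2pos : ∀ x ∈ Set.Ioo a b, 0 < d2 x := fun x hx => (habsub hx).1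
    -- δ is strictly convex on Ioo a b
    have hsc : StrictConvexOn ℝ (Set.Ioo a b) δ := by
      apply strictConvexOn_of_deriv2_pos (convex_Ioo a b)
        (hδC2.continuousOn.mono (fun x hx => hIoo (hsubIoo hx)))
      intro x hx
      rw [interior_Ioo] at hx
      have : deriv^[2] δ x = deriv (deriv δ) x := by
        simp [Function.iterate_succ_apply']
      rw [this, ← e2 x (hsubIoo hx)]
      exact hd2pos x hx
    -- a.e. on Ioo a b we have δ = lam * φ
    have hae : ∀ᵐ x ∂(volume.restrict (Set.Ioo a b)), δ x = lam * φ x := by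
      have h1 : ∀ᵐ x ∂(volume.restrict (Set.Ioo a b)),
          min (d2 x - hbar x * deriv (deriv u) (Function.invFun (deriv u) (d1 x)))
            (lam * φ x - δ x) = 0 :=
        ae_restrict_of_ae_restrict_of_subset (fun x hx => hIoo (hsubIoo hx)) hFBP
      have h2 : ∀ᵐ x ∂(volume.restrict (Set.Ioo a b)), x ∈ Set.Ioo a b :=
        ae_restrict_mem measurableSet_Ioo
      filter_upwards [h1, h2] with x hmin hx
      have hA : 0 < d2 x - hbar x * deriv (deriv u) (Function.invFun (deriv u) (d1 x)) := by
        have h3 : hbar x * deriv (deriv u) (Function.invFun (deriv u) (d1 x)) ≤ 0 :=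
          mul_nonpos_of_nonneg_of_nonpos (hbar0 x (hIoo (hsubIoo hx))) (hu'' _).le
        have := hd2pos x hx
        linarith
      rcases min_choice (d2 x - hbar x * deriv (deriv u) (Function.invFun (deriv u) (d1 x)))
          (lam * φ x - δ x) with h | h
      · rw [h] at hmin; linarith
      · rw [h] at hmin; linarith
    -- points of Ioo c d ⊆ Ioo a b where equality holds
    have hpt : ∀ c d : ℝ, c < d → Set.Ioo c d ⊆ Set.Ioo a b →
        ∃ x ∈ Set.Ioo c d, δ x = lam * φ x := by
      intro c d hcd hsub
      by_contra hno
      push_neg at hno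
      have hsubne : Set.Ioo c d ⊆ {x | ¬ δ x = lam * φ x} := fun x hx => hno x hx
      have h0 : (volume.restrict (Set.Ioo a b)) {x | ¬ δ x = lam * φ x} = 0 := hae
      have h1 : (volume.restrict (Set.Ioo a b)) (Set.Ioo c d) = 0 :=
        le_antisymm (h0 ▸ measure_mono hsubne) zero_le
      rw [Measure.restrict_apply measurableSet_Ioo,
        Set.inter_eq_self_of_subset_left hsub, Real.volume_Ioo] at h1
      simp only [ENNReal.ofReal_eq_zero] at h1
      linarith
    -- pick three ordered points with equality
    have hap : a < p₀ := hab.1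
    have hpb : p₀ < b := hab.2
    obtain ⟨x1, hx1, he1'⟩ := hpt a p₀ hap (fun x hx => ⟨hx.1, hx.2.trans hpb⟩)
    obtain ⟨x3, hx3, he3⟩ := hpt p₀ b hpb (fun x hx => ⟨hap.trans hx.1, hx.2⟩)
    have h13 : x1 < x3 := hx1.2.trans hx3.1
    obtain ⟨x2, hx2, he2'⟩ := hpt x1 x3 h13
      (fun x hx => ⟨hx1.1.trans hx.1, hx.2.trans hx3.2⟩)
    have hx1m : x1 ∈ Set.Ioo a b := ⟨hx1.1, hx1.2.trans hpb⟩
    have hx3m : x3 ∈ Set.Ioo a b := ⟨hap.trans hx3.1, hx3.2⟩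
    set t : ℝ := (x3 - x2) / (x3 - x1) with ht
    have hden : (0:ℝ) < x3 - x1 := by linarith [hx2.1, hx2.2]
    have ht0 : 0 < t := div_pos (by linarith [hx2.2]) hden
    have ht1 : 0 < 1 - t := by
      have : t < 1 := (div_lt_one hden).2 (by linarith [hx2.1])
      linarith
    have hne : x3 - x1 ≠ 0 := ne_of_gt hden
    have hcomb : t * x1 + (1 - t) * x3 = x2 := by
      rw [ht]; field_simp; ring
    have hsum : t + (1 - t) = 1 := by ring
    -- strict convexity inequality
    have hlt : δ (t • x1 + (1 - t) • x3) < t • δ x1 + (1 - t) • δ x3 :=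
      hsc.2 hx1m hx3m (ne_of_lt h13) ht0 ht1 hsum
    -- concavity of φ inequality
    have hge : t • φ x1 + (1 - t) • φ x3 ≤ φ (t • x1 + (1 - t) • x3) :=
      hφconc.2 (hIoo (hsubIoo hx1m)) (hIoo (hsubIoo hx3m)) ht0.le ht1.le hsum
    simp only [smul_eq_mul, hcomb] at hlt hge
    rw [he1', he2', he3] at hlt
    nlinarith
  -- conclude concavity on Icc 0 1
  have hintIcc : interior s = Set.Ioo (0:ℝ) 1 := interior_Icc
  apply concaveOn_of_deriv2_nonpos (convex_Icc 0 1) hδC2.continuousOn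
  · rw [hintIcc]
    exact (hδC2.differentiableOn two_ne_zero).mono hIoo
  · rw [hintIcc]
    have hd1diff : DifferentiableOn ℝ d1 (Set.Ioo 0 1) :=
      (hd1cd.differentiableOn one_ne_zero).mono hIoo
    exact hd1diff.congr (fun x hx => (e1 hx).symm)
  · intro x hx
    rw [hintIcc] at hx
    have : deriv^[2] δ x = deriv (deriv δ) x := by
      simp [Function.iterate_succ_apply']
    rw [this, ← e2 x hx]
    exact key x hx
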